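/- Consider the birth-and-death chain with parameters L ≥ 1 and α ∈ (0,1]. Then for every 1 ≤ i ≤ L−1 and every t ≥ 0, one has P^t(0,i) = P^t(L,L−i) and P^t(0,i) ≤ 2α. -/

import Mathlib

open MeasureTheory Filter Topology

/-- Transition probabilities of the birth-and-death chain on `{0,…,L}` with parameter `α`:
`P(0,1) = P(L,L−1) = α`, `P(0,0) = P(L,L) = 1−α`, and `P(i,i+1) = P(i,i−1) = 1/2` for
`0 < i < L`. -/
noncomputable def bdKernel (L : ℕ) (α : ℝ) (i j : ℕ) : ℝ :=
  if i = 0 then (if j = 1 then α else if j = 0 then 1 - α else 0)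
  else if i = L then (if j = L - 1 then α else if j = L then 1 - α else 0)
  else if i < L then (if j = i + 1 ∨ j = i - 1 then 1 / 2 else 0)
  else 0

/-- `bdDist L α x t j = P^t(x, j)`, the probability that the birth-and-death chain started at
`x` is at state `j` at time `t`. -/
noncomputable def bdDist (L : ℕ) (α : ℝ) (x : ℕ) : ℕ → ℕ → ℝ
  | 0 => fun j => if j = x then 1 else 0
  | t + 1 => fun j => ∑ i ∈ Finset.range (L + 1), bdDist L α x t i * bdKernel L α i j

/-- Total variation distance between two distributions on the state space `{0,…,L}`. -/
noncomputable def bdTV (L : ℕ) (μ ν : ℕ → ℝ) : ℝ :=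
  ⨆ A : Set ℕ,
    |∑ i ∈ Finset.range (L + 1), Set.indicator A μ i -
      ∑ i ∈ Finset.range (L + 1), Set.indicator A ν i|

open Classical in
/-- `bdStay L α T x A = P(X_t ∈ A_t for all 0 ≤ t ≤ T | X_0 = x)` for the birth-and-death
chain with parameters `L` and `α`. -/
noncomputable def bdStay (L : ℕ) (α : ℝ) (T : ℕ) (x : ℕ) (A : ℕ → Set ℕ) : ℝ :=
  ∑ p : Fin (T + 1) → Fin (L + 1),
    if (p 0 : ℕ) = x ∧ ∀ t : Fin (T + 1), (p t : ℕ) ∈ A (t : ℕ) then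
      ∏ i : Fin T, bdKernel L α (p i.castSucc) (p i.succ) else 0

/-- The separation `S^A_T(0,L)` of a separating sequence `A` for the birth-and-death chain. -/
noncomputable def bdSep (L : ℕ) (α : ℝ) (T : ℕ) (A : ℕ → Set ℕ) : ℝ :=
  bdStay L α T 0 A + bdStay L α T L (fun t => (A t)ᶜ)

lemma bdKernel_nonneg (L : ℕ) {α : ℝ} (h0 : 0 ≤ α) (h1 : α ≤ 1) (i j : ℕ) :
    0 ≤ bdKernel L α i j := by
  unfold bdKernel; split_ifs <;> linarith

lemma bdKernel_symm (L : ℕ) (hL : 1 ≤ L) (α : ℝ) {i j : ℕ} (hi : i ≤ L) (hj : j ≤ L) :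
    bdKernel L α (L - i) (L - j) = bdKernel L α i j := by
  unfold bdKernel
  split_ifs <;> first | rfl | omega

lemma bdKernel_row_sum (L : ℕ) (hL : 1 ≤ L) (α : ℝ) {i : ℕ} (hi : i ≤ L) :
    ∑ j ∈ Finset.range (L + 1), bdKernel L α i j = 1 := by
  rcases eq_or_ne i 0 with h0 | h0
  · subst h0
    have hrw : ∀ j, bdKernel L α 0 j
        = (if j = 1 then α else 0) + (if j = 0 then 1 - α else 0) := by
      intro j; unfold bdKernel
      split_ifs <;> first | (exfalso; omega) | norm_num
    rw [Finset.sum_congr rfl fun j _ => hrw j, Finset.sum_add_distrib,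
      Finset.sum_ite_eq' _ 1, Finset.sum_ite_eq' _ 0,
      if_pos (Finset.mem_range.mpr (by omega)), if_pos (Finset.mem_range.mpr (by omega))]
    ring
  · rcases eq_or_ne i L with hiL | hiL
    · rw [hiL]
      have hrw : ∀ j, bdKernel L α L j
          = (if j = L - 1 then α else 0) + (if j = L then 1 - α else 0) := by
        intro j; unfold bdKernel
        split_ifs <;> first | (exfalso; omega) | norm_num
      rw [Finset.sum_congr rfl fun j _ => hrw j, Finset.sum_add_distrib,
        Finset.sum_ite_eq' _ (L - 1), Finset.sum_ite_eq' _ L,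
        if_pos (Finset.mem_range.mpr (by omega)), if_pos (Finset.mem_range.mpr (by omega))]
      ring
    · have hrw : ∀ j, bdKernel L α i j
          = (if j = i + 1 then (1:ℝ)/2 else 0) + (if j = i - 1 then (1:ℝ)/2 else 0) := by
        intro j; unfold bdKernel
        split_ifs <;> first | (exfalso; omega) | norm_num
      rw [Finset.sum_congr rfl fun j _ => hrw j, Finset.sum_add_distrib,
        Finset.sum_ite_eq' _ (i + 1), Finset.sum_ite_eq' _ (i - 1),
        if_pos (Finset.mem_range.mpr (by omega)), if_pos (Finset.mem_range.mpr (by omega))]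
      norm_num

lemma bdDist_nonneg (L : ℕ) {α : ℝ} (h0 : 0 ≤ α) (h1 : α ≤ 1) (x : ℕ) :
    ∀ t j, 0 ≤ bdDist L α x t j := by
  intro t
  induction t with
  | zero => intro j; simp only [bdDist]; split_ifs <;> norm_num
  | succ t ih =>
      intro j
      exact Finset.sum_nonneg fun i _ => mul_nonneg (ih i) (bdKernel_nonneg L h0 h1 i j)

lemma bdDist_sum (L : ℕ) (hL : 1 ≤ L) (α : ℝ) {x : ℕ} (hx : x ≤ L) :
    ∀ t, ∑ j ∈ Finset.range (L + 1), bdDist L α x t j = 1 := by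
  intro t
  induction t with
  | zero =>
      simp only [bdDist]
      rw [Finset.sum_ite_eq' _ x, if_pos (Finset.mem_range.mpr (by omega))]
  | succ t ih =>
      show ∑ j ∈ Finset.range (L + 1), ∑ i ∈ Finset.range (L + 1),
          bdDist L α x t i * bdKernel L α i j = 1
      rw [Finset.sum_comm]
      calc ∑ i ∈ Finset.range (L + 1), ∑ j ∈ Finset.range (L + 1),
              bdDist L α x t i * bdKernel L α i j
          = ∑ i ∈ Finset.range (L + 1), bdDist L α x t i * 1 := by
            refine Finset.sum_congr rfl fun i hi => ?_
            rw [← Finset.mul_sum, bdKernel_row_sum L hL α (by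
              have := Finset.mem_range.mp hi; omega)]
        _ = 1 := by simpa using ih

lemma bdDist_le_one (L : ℕ) (hL : 1 ≤ L) {α : ℝ} (h0 : 0 ≤ α) (h1 : α ≤ 1) {x : ℕ}
    (hx : x ≤ L) (t : ℕ) {j : ℕ} (hj : j ≤ L) : bdDist L α x t j ≤ 1 := by
  have := Finset.single_le_sum (f := fun j => bdDist L α x t j)
    (fun i _ => bdDist_nonneg L h0 h1 x t i) (Finset.mem_range.mpr (by omega : j < L + 1))
  rwa [bdDist_sum L hL α hx t] at this

lemma bdDist_symm (L : ℕ) (hL : 1 ≤ L) (α : ℝ) :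
    ∀ t, ∀ j, j ≤ L → bdDist L α L t (L - j) = bdDist L α 0 t j := by
  intro t
  induction t with
  | zero =>
      intro j hj
      simp only [bdDist]
      by_cases h : j = 0
      · subst h; simp
      · rw [if_neg (by omega), if_neg h]
  | succ t ih =>
      intro j hj
      show ∑ i ∈ Finset.range (L + 1), bdDist L α L t i * bdKernel L α i (L - j)
          = ∑ i ∈ Finset.range (L + 1), bdDist L α 0 t i * bdKernel L α i j
      rw [← Finset.sum_range_reflect]
      refine Finset.sum_congr rfl fun i hi => ?_
      have hiL : i ≤ L := by have := Finset.mem_range.mp hi; omega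
      have h1 : L + 1 - 1 - i = L - i := by omega
      rw [h1, ih i hiL, bdKernel_symm L hL α hiL hj]

lemma bdDist_zero_bound (L : ℕ) (hL : 1 ≤ L) {α : ℝ} (h0 : 0 < α) (h1 : α ≤ 1) :
    ∀ t, ∀ j, 1 ≤ j → j + 1 ≤ L → bdDist L α 0 t j ≤ 2 * α := by
  intro t
  induction t with
  | zero =>
      intro j hj1 hj2
      simp only [bdDist]
      rw [if_neg (by omega)]
      linarith
  | succ t ih =>
      intro j hj1 hj2
      show ∑ i ∈ Finset.range (L + 1), bdDist L α 0 t i * bdKernel L α i j ≤ 2 * α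
      have hkey : ∑ i ∈ Finset.range (L + 1), bdDist L α 0 t i * bdKernel L α i j
          = bdDist L α 0 t (j - 1) * bdKernel L α (j - 1) j
            + bdDist L α 0 t (j + 1) * bdKernel L α (j + 1) j := by
        refine Finset.sum_eq_add (j - 1) (j + 1) (by omega) (fun k hk hkne => ?_) ?_ ?_
        · have hkL : k ≤ L := by have := Finset.mem_range.mp hk; omega
          have hz : bdKernel L α k j = 0 := by
            unfold bdKernel
            split_ifs <;> first | rfl | (exfalso; omega)
          rw [hz, mul_zero]
        · intro h; exact absurd (Finset.mem_range.mpr (by omega : j - 1 < L + 1)) h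
        · intro h; exact absurd (Finset.mem_range.mpr (by omega : j + 1 < L + 1)) h
      rw [hkey]
      have hle := h1
      have hnn := h0.le
      have hterm1 : bdDist L α 0 t (j - 1) * bdKernel L α (j - 1) j ≤ α := by
        rcases eq_or_lt_of_le hj1 with he | hlt
        · -- j = 1
          have hj : j = 1 := he.symm
          subst hj
          have hk : bdKernel L α (1 - 1) 1 = α := by unfold bdKernel; norm_num
          rw [hk]
          calc bdDist L α 0 t (1 - 1) * α ≤ 1 * α :=
                mul_le_mul_of_nonneg_right
                  (bdDist_le_one L hL hnn hle (by omega) t (by omega)) hnn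
            _ = α := one_mul α
        · -- 2 ≤ j, so j - 1 is interior
          have hk : bdKernel L α (j - 1) j = 1 / 2 := by
            unfold bdKernel
            rw [if_neg (by omega), if_neg (by omega), if_pos (by omega),
              if_pos (by omega)]
          rw [hk]
          have hle2 : bdDist L α 0 t (j - 1) ≤ 2 * α := ih (j - 1) (by omega) (by omega)
          nlinarith [bdDist_nonneg L hnn hle 0 t (j - 1)]
      have hterm2 : bdDist L α 0 t (j + 1) * bdKernel L α (j + 1) j ≤ α := by
        rcases eq_or_lt_of_le hj2 with he | hlt
        · -- j + 1 = L
          have hk : bdKernel L α (j + 1) j = α := by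
            unfold bdKernel
            rw [if_neg (by omega), if_pos he, if_pos (by omega)]
          rw [hk]
          calc bdDist L α 0 t (j + 1) * α ≤ 1 * α :=
                mul_le_mul_of_nonneg_right
                  (bdDist_le_one L hL hnn hle (by omega) t (by omega)) hnn
            _ = α := one_mul α
        · -- j + 1 < L, interior
          have hk : bdKernel L α (j + 1) j = 1 / 2 := by
            unfold bdKernel
            rw [if_neg (by omega), if_neg (by omega), if_pos (by omega),
              if_pos (by omega)]
          rw [hk]
          have hle2 : bdDist L α 0 t (j + 1) ≤ 2 * α := ih (j + 1) (by omega) (by omega)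
          nlinarith [bdDist_nonneg L hnn hle 0 t (j + 1)]
      linarith

/-- Part (a) of the key lemma: for `1 ≤ i ≤ L−1` and all `t ≥ 0`,
`P^t(0,i) = P^t(L,L−i)` and `P^t(0,i) ≤ 2α`. -/
theorem bdDist_interior_le (L : ℕ) (hL : 1 ≤ L) (α : ℝ) (hα : α ∈ Set.Ioc (0 : ℝ) 1)
    (i : ℕ) (hi1 : 1 ≤ i) (hi2 : i ≤ L - 1) (t : ℕ) :
    bdDist L α 0 t i = bdDist L α L t (L - i) ∧ bdDist L α 0 t i ≤ 2 * α := by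
  obtain ⟨h0, h1⟩ := hα
  constructor
  · exact (bdDist_symm L hL α t i (by omega)).symm
  · exact bdDist_zero_bound L hL h0 h1 t i hi1 (by omega)
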